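/- arXiv:1401.1051 — 2 statements merged into one kernel-verified Lean document; each statement's English description precedes it below -/
import Mathlib

section
/- Let x, y : [a, b] → ℝ be H¹ (absolutely continuous with square-integrable derivative), with x(a) = y(a) = x(b) = y(b) = δ > 0, x(t) ≤ δ and y(t) = δ for all t ∈ [a, b], and x(t_0) = 0 for some t_0 ∈ (a, b). Suppose A > 0 and B : [a, b] → ℝ is measurable with A ẋ(t)² + B(t) ẋ(t) ≥ 0 almost everywhere and strict inequality on a set of positive measure. Further suppose g : [a, b] × ℝ → ℝ is such that g(t, s) is nonincreasing in s for s > 0. Then ∫_a^b [A ẋ² + B ẋ + g(t, x(t))] dt > ∫_a^b g(t, δ) dt = ∫_a^b [A ẏ² + B ẏ + g(t, y(t))] dt. -/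
open MeasureTheory

/-- Abstract comparison estimate (Lemma 3.1 of Yu–Zhang): freezing the gap at
level `δ` strictly decreases the action when the kinetic cross terms are
nonnegative (and positive on a set of positive measure) and the potential
`g(t, s)` is nonincreasing in `s`. -/
theorem excision_comparison_estimate
    (a b δ t0 A : ℝ) (hab : a < b) (hδ : 0 < δ) (hA : 0 < A)
    (x x' B y : ℝ → ℝ)
    (hx_rep : ∀ t ∈ Set.Icc a b, x t = x a + ∫ s in a..t, x' s)
    (hx'int : IntervalIntegrable x' volume a b)
    (hx'sq : IntervalIntegrable (fun t => (x' t) ^ 2) volume a b)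
    (hxa : x a = δ) (hxb : x b = δ)
    (hx_nonneg : ∀ t ∈ Set.Icc a b, 0 ≤ x t)
    (hx_le : ∀ t ∈ Set.Icc a b, x t ≤ δ)
    (ht0 : t0 ∈ Set.Ioo a b) (hx0 : x t0 = 0)
    (hy : ∀ t ∈ Set.Icc a b, y t = δ)
    (hBmeas : Measurable B)
    (hae : ∀ᵐ t ∂(volume.restrict (Set.Icc a b)), 0 ≤ A * (x' t) ^ 2 + B t * x' t)
    (hpos : 0 < volume {t ∈ Set.Icc a b | 0 < A * (x' t) ^ 2 + B t * x' t})
    (g : ℝ → ℝ → ℝ)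
    (hg : ∀ t s₁ s₂, 0 ≤ s₁ → s₁ ≤ s₂ → g t s₂ ≤ g t s₁)
    (hint1 : IntervalIntegrable (fun t => A * (x' t) ^ 2 + B t * x' t) volume a b)
    (hint2 : IntervalIntegrable (fun t => g t (x t)) volume a b)
    (hint3 : IntervalIntegrable (fun t => g t δ) volume a b) :
    ((∫ t in a..b, (A * (x' t) ^ 2 + B t * x' t + g t (x t))) > ∫ t in a..b, g t δ)
    ∧ (∫ t in a..b, g t δ)
      = ∫ t in a..b, (A * (0 : ℝ) ^ 2 + B t * 0 + g t (y t)) := by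
  set f : ℝ → ℝ := fun t => A * (x' t) ^ 2 + B t * x' t with hf
  -- positivity of the kinetic part
  have hIoc : Set.Ioc a b ⊆ Set.Icc a b := Set.Ioc_subset_Icc_self
  have hae' : 0 ≤ᵐ[volume.restrict (Set.Ioc a b)] f := by
    have := ae_restrict_of_ae_restrict_of_subset hIoc hae
    exact this
  have hIntOn : IntegrableOn f (Set.Ioc a b) volume :=
    (hint1.mono_set (by rw [Set.uIcc_of_le hab.le]) : IntervalIntegrable f volume a b).1
  have hkin : 0 < ∫ t in Set.Ioc a b, f t := by
    rw [setIntegral_pos_iff_support_of_nonneg_ae hae' hIntOn]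
    have hsub : {t ∈ Set.Icc a b | 0 < f t} ⊆ (Function.support f ∩ Set.Ioc a b) ∪ {a, b} := by
      intro t ht
      rcases ht with ⟨htI, htpos⟩
      by_cases h1 : t = a
      · exact Or.inr (Or.inl h1)
      by_cases h2 : t = b
      · exact Or.inr (Or.inr h2)
      · exact Or.inl ⟨ne_of_gt htpos, ⟨lt_of_le_of_ne htI.1 (Ne.symm h1), htI.2⟩⟩
    have hle : volume {t ∈ Set.Icc a b | 0 < f t}
        ≤ volume (Function.support f ∩ Set.Ioc a b) + volume ({a, b} : Set ℝ) :=
      le_trans (measure_mono hsub) (measure_union_le _ _)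
    have hab0 : volume ({a, b} : Set ℝ) = 0 := by
      exact Set.Finite.measure_zero (Set.toFinite _) volume
    rw [hab0, add_zero] at hle
    exact lt_of_lt_of_le hpos hle
  have hkin' : 0 < ∫ t in a..b, f t := by
    rwa [intervalIntegral.integral_of_le hab.le]
  -- monotonicity of the potential part
  have hmono : ∫ t in a..b, g t δ ≤ ∫ t in a..b, g t (x t) := by
    apply intervalIntegral.integral_mono_on hab.le hint3 hint2
    intro t ht
    exact hg t (x t) δ (hx_nonneg t ht) (hx_le t ht)
  constructor
  · have hsplit : (∫ t in a..b, (A * (x' t) ^ 2 + B t * x' t + g t (x t)))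
        = (∫ t in a..b, f t) + ∫ t in a..b, g t (x t) := by
      rw [← intervalIntegral.integral_add hint1 hint2]
    rw [hsplit]
    calc ∫ t in a..b, g t δ ≤ ∫ t in a..b, g t (x t) := hmono
      _ < (∫ t in a..b, f t) + ∫ t in a..b, g t (x t) := by linarith
  · apply intervalIntegral.integral_congr
    intro t ht
    rw [Set.uIcc_of_le hab.le] at ht
    simp [hy t ht]
end

section
/- Consider two bodies on the line with equal masses m, positions q_1(t) ≤ q_2(t), center of mass at the origin, and gap x(t) = q_2(t) − q_1(t) ≥ 0. For the two-body action A(x) = ∫_a^b [(m/4) ẋ² + m²/x] dt on H¹ paths with fixed positive endpoints x(a) = x_a > 0, x(b) = x_b > 0: any path x with x(t_0) = 0 for some t_0 ∈ (a, b) and x ≤ δ on some subinterval [t_0 − ε, t_0 + ε] with x(t_0 − ε) = x(t_0 + ε) = δ has strictly larger action than the modified path equal to δ on [t_0 − ε, t_0 + ε] and equal to x elsewhere. -/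
open MeasureTheory

open scoped ENNReal

/-- The `N = 2` instance of Lemma 3.1 of Yu–Zhang: for the two-body action
`∫ (m/4) ẋ² + m²/x` (valued in `ℝ≥0∞`), a path whose gap `x` collides
(`x(t0) = 0`) and stays `≤ δ` on `[t0 − ε, t0 + ε]` with boundary values `δ`
has strictly larger action than the path frozen at `δ` on that interval. -/
theorem two_body_excision_strict
    (a b δ t0 ε m : ℝ) (hab : a < b) (hδ : 0 < δ) (hm : 0 < m) (hε : 0 < ε)
    (hsub : Set.Icc (t0 - ε) (t0 + ε) ⊆ Set.Ioo a b)
    (x x' : ℝ → ℝ)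
    (hrep : ∀ t ∈ Set.Icc a b, x t = x a + ∫ s in a..t, x' s)
    (hx'int : IntervalIntegrable x' volume a b)
    (hx'sq : IntervalIntegrable (fun t => (x' t) ^ 2) volume a b)
    (hxa : 0 < x a) (hxb : 0 < x b)
    (hnonneg : ∀ t ∈ Set.Icc a b, 0 ≤ x t)
    (hx0 : t0 ∈ Set.Ioo a b ∧ x t0 = 0)
    (hle : ∀ t ∈ Set.Icc (t0 - ε) (t0 + ε), x t ≤ δ)
    (hbd1 : x (t0 - ε) = δ) (hbd2 : x (t0 + ε) = δ)
    (hpos_out : ∀ t ∈ Set.Icc a b, t ∉ Set.Icc (t0 - ε) (t0 + ε) → 0 < x t)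
    (z z' : ℝ → ℝ)
    (hz : ∀ t, z t = if t ∈ Set.Icc (t0 - ε) (t0 + ε) then δ else x t)
    (hz' : ∀ t, z' t = if t ∈ Set.Icc (t0 - ε) (t0 + ε) then 0 else x' t) :
    (∫⁻ t in Set.Icc a b,
        (ENNReal.ofReal ((m / 4) * (x' t) ^ 2)
          + ENNReal.ofReal (m ^ 2) / ENNReal.ofReal (x t)))
    > ∫⁻ t in Set.Icc a b,
        (ENNReal.ofReal ((m / 4) * (z' t) ^ 2)
          + ENNReal.ofReal (m ^ 2) / ENNReal.ofReal (z t)) := by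
  classical
  set I : Set ℝ := Set.Icc (t0 - ε) (t0 + ε) with hI
  set J : Set ℝ := Set.Icc a b with hJ
  have hab' : a ≤ b := hab.le
  have hmemI1 : t0 - ε ∈ I := Set.left_mem_Icc.2 (by linarith)
  have hmemI2 : t0 + ε ∈ I := Set.right_mem_Icc.2 (by linarith)
  have ht0I : t0 ∈ I := Set.mem_Icc.2 ⟨by linarith, by linarith⟩
  have ha1 : a < t0 - ε := (hsub hmemI1).1
  have hb1 : t0 + ε < b := (hsub hmemI2).2
  have hIJ : I ⊆ J := fun t ht => Set.Ioo_subset_Icc_self (hsub ht)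
  have hImeas : MeasurableSet I := measurableSet_Icc
  have hJImeas : MeasurableSet (J \ I) := measurableSet_Icc.diff hImeas
  set fX : ℝ → ℝ≥0∞ := fun t =>
    ENNReal.ofReal ((m / 4) * (x' t) ^ 2) + ENNReal.ofReal (m ^ 2) / ENNReal.ofReal (x t)
    with hfX
  set fZ : ℝ → ℝ≥0∞ := fun t =>
    ENNReal.ofReal ((m / 4) * (z' t) ^ 2) + ENNReal.ofReal (m ^ 2) / ENNReal.ofReal (z t)
    with hfZ
  -- split lemma
  have hsplit : ∀ f : ℝ → ℝ≥0∞,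
      ∫⁻ t in J, f t = (∫⁻ t in I, f t) + ∫⁻ t in J \ I, f t := by
    intro f
    rw [← lintegral_union hJImeas Set.disjoint_sdiff_right, Set.union_diff_cancel hIJ]
  -- outside, integrands coincide
  have hout_eq : ∫⁻ t in J \ I, fZ t = ∫⁻ t in J \ I, fX t := by
    refine setLIntegral_congr_fun hJImeas ?_
    intro t ht
    simp only [hfZ, hfX, hz t, hz' t, if_neg (show t ∉ Set.Icc (t0 - ε) (t0 + ε) from ht.2)]
  -- value of z on I
  have hinZ : ∫⁻ t in I, fZ t
      = ENNReal.ofReal (m ^ 2) / ENNReal.ofReal δ * volume I := by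
    rw [setLIntegral_congr_fun hImeas (g := fun _ =>
        ENNReal.ofReal (m ^ 2) / ENNReal.ofReal δ) ?_]
    · exact setLIntegral_const _ _
    · intro t ht
      rw [hfZ]
      simp only
      rw [hz t, hz' t, if_pos ht, if_pos ht]
      norm_num
  have hvolI : volume I < ∞ := by
    rw [hI, Real.volume_Icc]; exact ENNReal.ofReal_lt_top
  have hCfin : ENNReal.ofReal (m ^ 2) / ENNReal.ofReal δ * volume I ≠ ∞ := by
    refine ENNReal.mul_ne_top ?_ hvolI.ne
    exact (ENNReal.div_lt_top ENNReal.ofReal_ne_top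
      (by simpa using (ENNReal.ofReal_pos.2 hδ).ne')).ne
  -- measurability of kinetic integrand on I
  have hsqInt : IntegrableOn (fun t => (x' t) ^ 2) (Set.Ioc a b) volume := by
    simpa [intervalIntegrable_iff, Set.uIoc_of_le hab'] using hx'sq
  have hIsubIoc : I ⊆ Set.Ioc a b := fun t ht => Set.Ioo_subset_Ioc_self (hsub ht)
  have haem : AEMeasurable (fun t => ENNReal.ofReal ((m / 4) * (x' t) ^ 2))
      (volume.restrict I) := by
    have h1 : AEStronglyMeasurable (fun t => (x' t) ^ 2) (volume.restrict I) :=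
      hsqInt.aestronglyMeasurable.mono_measure
        (Measure.restrict_mono hIsubIoc le_rfl)
    exact ENNReal.measurable_ofReal.comp_aemeasurable
      ((h1.aemeasurable).const_mul (m / 4))
  -- kinetic part on I is nonzero
  set K : ℝ≥0∞ := ∫⁻ t in I, ENNReal.ofReal ((m / 4) * (x' t) ^ 2) with hK
  have hKne : K ≠ 0 := by
    intro h0
    have hae : (fun t => ENNReal.ofReal ((m / 4) * (x' t) ^ 2))
        =ᵐ[volume.restrict I] 0 := (lintegral_eq_zero_iff' haem).1 h0
    have hx'ae : x' =ᵐ[volume.restrict I] 0 := by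
      filter_upwards [hae] with t ht
      have h1 : ENNReal.ofReal ((m / 4) * (x' t) ^ 2) = 0 := ht
      rw [ENNReal.ofReal_eq_zero] at h1
      have h4 : (0:ℝ) < m / 4 := by linarith
      have h5 : (x' t) ^ 2 ≤ 0 := by nlinarith
      have h6 : (x' t) ^ 2 = 0 := le_antisymm h5 (sq_nonneg _)
      exact pow_eq_zero_iff (by norm_num) |>.1 h6
    -- hence the interval integral of x' over [t0-ε, t0] vanishes
    have hsubI : Set.Ioc (t0 - ε) t0 ⊆ I := fun s hs =>
      Set.mem_Icc.2 ⟨hs.1.le, by linarith [hs.2]⟩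
    have hx'ae2 : x' =ᵐ[volume.restrict (Set.Ioc (t0 - ε) t0)] 0 :=
      ae_mono (Measure.restrict_mono hsubI le_rfl) hx'ae
    have hint0 : (∫ s in (t0 - ε)..t0, x' s) = 0 := by
      rw [intervalIntegral.integral_of_le (by linarith : t0 - ε ≤ t0)]
      exact integral_eq_zero_of_ae hx'ae2
    -- but it equals x t0 - x (t0-ε) = -δ
    have hmem1 : t0 - ε ∈ J := hIJ hmemI1
    have hmem2 : t0 ∈ J := hIJ ht0I
    have hadd : (∫ s in a..(t0 - ε), x' s) + (∫ s in (t0 - ε)..t0, x' s)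
        = ∫ s in a..t0, x' s := by
      apply intervalIntegral.integral_add_adjacent_intervals
      · exact hx'int.mono_set (by
          rw [Set.uIcc_of_le hab', Set.uIcc_of_le (by linarith : a ≤ t0 - ε)]
          exact Set.Icc_subset_Icc le_rfl (by linarith))
      · exact hx'int.mono_set (by
          rw [Set.uIcc_of_le hab', Set.uIcc_of_le (by linarith : t0 - ε ≤ t0)]
          exact Set.Icc_subset_Icc (by linarith) (by linarith))
    have e1 := hrep _ hmem1
    have e2 := hrep _ hmem2
    rw [hbd1] at e1
    rw [hx0.2] at e2
    have : (∫ s in (t0 - ε)..t0, x' s) = -δ := by linarith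
    rw [hint0] at this
    linarith
  -- lower bound for the x-integral on I
  have hinX : K + ENNReal.ofReal (m ^ 2) / ENNReal.ofReal δ * volume I
      ≤ ∫⁻ t in I, fX t := by
    have hptwise : ∀ t ∈ I,
        ENNReal.ofReal ((m / 4) * (x' t) ^ 2)
          + ENNReal.ofReal (m ^ 2) / ENNReal.ofReal δ ≤ fX t := by
      intro t ht
      refine add_le_add le_rfl ?_
      exact ENNReal.div_le_div_left (ENNReal.ofReal_le_ofReal (hle t ht)) _
    calc K + ENNReal.ofReal (m ^ 2) / ENNReal.ofReal δ * volume I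
        = ∫⁻ t in I, (ENNReal.ofReal ((m / 4) * (x' t) ^ 2)
            + ENNReal.ofReal (m ^ 2) / ENNReal.ofReal δ) := by
          rw [lintegral_add_right' _ aemeasurable_const, setLIntegral_const]
      _ ≤ ∫⁻ t in I, fX t :=
          setLIntegral_mono_ae' hImeas (Filter.Eventually.of_forall hptwise)
  -- strict inequality on I
  have hinner : ∫⁻ t in I, fZ t < ∫⁻ t in I, fX t := by
    rw [hinZ]
    calc ENNReal.ofReal (m ^ 2) / ENNReal.ofReal δ * volume I
        < K + ENNReal.ofReal (m ^ 2) / ENNReal.ofReal δ * volume I := by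
          apply ENNReal.lt_add_right hCfin hKne |>.trans_eq
          rw [add_comm]
      _ ≤ _ := hinX
  -- the outside integral is finite
  have hout_fin : ∫⁻ t in J \ I, fX t ≠ ∞ := by
    -- continuity of x on J
    have hxcont : ContinuousOn x J := by
      have hprim : ContinuousOn (fun t => x a + ∫ s in a..t, x' s) (Set.uIcc a b) :=
        continuousOn_const.add
          (intervalIntegral.continuousOn_primitive_interval' hx'int Set.left_mem_uIcc)
      rw [Set.uIcc_of_le hab'] at hprim
      exact hprim.congr hrep
    -- positive lower bound for x on the compact set S = J \ Ioo(t0-ε,t0+ε)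
    set S : Set ℝ := J \ Set.Ioo (t0 - ε) (t0 + ε) with hS
    have hScomp : IsCompact S := isCompact_Icc.diff isOpen_Ioo
    have hSne : S.Nonempty := ⟨a, Set.left_mem_Icc.2 hab', fun h => by
      have := h.1; linarith⟩
    obtain ⟨t₁, ht₁S, ht₁min⟩ := hScomp.exists_isMinOn hSne
      (hxcont.mono (Set.diff_subset))
    have hxt₁ : 0 < x t₁ := by
      by_cases h : t₁ ∈ I
      · have h1 : t₁ = t0 - ε ∨ t₁ = t0 + ε := by
          rcases Set.mem_Icc.1 h with ⟨h2, h3⟩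
          rcases lt_or_eq_of_le h2 with h2 | h2
          · rcases lt_or_eq_of_le h3 with h3 | h3
            · exact absurd (Set.mem_Ioo.2 ⟨h2, h3⟩) ht₁S.2
            · exact Or.inr h3
          · exact Or.inl h2.symm
        rcases h1 with h1 | h1 <;> rw [h1] <;> [rw [hbd1]; rw [hbd2]] <;> exact hδ
      · exact hpos_out t₁ ht₁S.1 h
    have hxlb : ∀ t ∈ J \ I, x t₁ ≤ x t := by
      intro t ht
      refine ht₁min ?_
      exact ⟨ht.1, fun hmem => ht.2 (Set.Ioo_subset_Icc_self hmem)⟩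
    -- pointwise bound
    have hbound : ∀ t ∈ J \ I, fX t ≤ ENNReal.ofReal ((m / 4) * (x' t) ^ 2)
        + ENNReal.ofReal (m ^ 2) / ENNReal.ofReal (x t₁) := by
      intro t ht
      exact add_le_add le_rfl
        (ENNReal.div_le_div_left (ENNReal.ofReal_le_ofReal (hxlb t ht)) _)
    have h1 : ∫⁻ t in J \ I, fX t
        ≤ (∫⁻ t in J \ I, ENNReal.ofReal ((m / 4) * (x' t) ^ 2))
          + ENNReal.ofReal (m ^ 2) / ENNReal.ofReal (x t₁) * volume (J \ I) := by
      calc ∫⁻ t in J \ I, fX t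
          ≤ ∫⁻ t in J \ I, (ENNReal.ofReal ((m / 4) * (x' t) ^ 2)
              + ENNReal.ofReal (m ^ 2) / ENNReal.ofReal (x t₁)) :=
            setLIntegral_mono_ae' hJImeas (Filter.Eventually.of_forall hbound)
        _ = _ := by rw [lintegral_add_right' _ aemeasurable_const, setLIntegral_const]
    refine ne_top_of_le_ne_top ?_ h1
    refine ENNReal.add_ne_top.2 ⟨?_, ?_⟩
    · -- kinetic part finite: bounded by the lintegral over Ioc a b
      have h2 : ∫⁻ t in J \ I, ENNReal.ofReal ((m / 4) * (x' t) ^ 2)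
          ≤ ∫⁻ t in Set.Ioc a b ∪ {a}, ENNReal.ofReal ((m / 4) * (x' t) ^ 2) := by
        refine lintegral_mono_set ?_
        intro t ht
        rcases eq_or_lt_of_le ht.1.1 with h | h
        · exact Or.inr (by simp [h.symm])
        · exact Or.inl ⟨h, ht.1.2⟩
      refine ne_top_of_le_ne_top ?_ h2
      rw [lintegral_union (measurableSet_singleton a)
        (by simp [Set.disjoint_singleton_right])]
      refine ENNReal.add_ne_top.2 ⟨?_, ?_⟩
      · have hint : Integrable (fun t => (m / 4) * (x' t) ^ 2)
            (volume.restrict (Set.Ioc a b)) := hsqInt.const_mul _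
        exact hint.lintegral_lt_top.ne
      · simp
    · refine ENNReal.mul_ne_top ?_ ?_
      · exact (ENNReal.div_lt_top ENNReal.ofReal_ne_top
          (by simpa using (ENNReal.ofReal_pos.2 hxt₁).ne')).ne
      · have hvolJ : volume J < ∞ := by rw [hJ, Real.volume_Icc]; exact ENNReal.ofReal_lt_top
        exact ((measure_mono Set.diff_subset).trans_lt hvolJ).ne
  -- conclude
  show (∫⁻ t in J, fZ t) < ∫⁻ t in J, fX t
  rw [hsplit fZ, hsplit fX, hout_eq]
  exact ENNReal.add_lt_add_right hout_fin hinner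
end
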